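/- arXiv:2005.02391 — 3 statements merged into one kernel-verified Lean document; each statement's English description precedes it below -/
import Mathlib

section
/- Define c(n,k) = (2/4^k) · ∑_{j=1}^{k} (-1)^{k−j} C(2k, k−j) (2j)^{2n}. Then for all natural numbers n ≥ k ≥ 1, ∑_{i=k}^{n} C(k, i−k) c(n,i) = 2^{2(n−k)} c(n,k). -/
open Finset Nat Function Polynomial fwdDiff fwdDiff_aux

/-- The coefficients c(n,k) as rational numbers. -/
def cCoeff (n k : ℕ) : ℚ :=
  (2 / 4 ^ k) * ∑ j ∈ Finset.Icc 1 k,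
    (-1 : ℚ) ^ (k - j) * ((2 * k).choose (k - j)) * (2 * j : ℚ) ^ (2 * n)

def gfun (n : ℕ) : ℤ → ℚ := fun x => (2 * (x:ℚ))^(2*n)

/-- iterated forward difference of polynomial of low degree vanishes -/
lemma fwdDiff_poly_zero : ∀ (d : ℕ) (p : ℚ[X]), p.natDegree ≤ d →
    (Δ_[(1:ℤ)])^[d+1] (fun x : ℤ => p.eval (x : ℚ)) = 0 := by
  intro d
  induction d with
  | zero =>
    intro p hp
    obtain ⟨c, rfl⟩ := Polynomial.natDegree_eq_zero.mp (Nat.le_zero.mp hp)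
    have : (fun x : ℤ => Polynomial.eval (x:ℚ) (C c)) = (fun _ : ℤ => (c:ℚ)) := by
      funext x; simp
    rw [iterate_one, this, fwdDiff_const]
    rfl
  | succ d ih =>
    intro p hp
    rw [iterate_succ_apply]
    have hΔ : Δ_[(1:ℤ)] (fun x : ℤ => p.eval (x : ℚ))
        = fun x : ℤ => (p.comp (X + C 1) - p).eval (x : ℚ) := by
      funext x
      simp [fwdDiff, Polynomial.eval_comp]
    rw [hΔ]
    apply ih
    by_cases h0 : p.natDegree = 0
    · obtain ⟨c, rfl⟩ := Polynomial.natDegree_eq_zero.mp h0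
      simp
    · have hp0 : p ≠ 0 := fun h => h0 (by simp [h])
      have hX : (X + C (1:ℚ)).natDegree = 1 := by
        simpa using Polynomial.natDegree_X_add_C (1:ℚ)
      have hcomp0 : p.comp (X + C 1) ≠ 0 := fun h => by
        have := Polynomial.natDegree_comp (p := p) (q := X + C (1:ℚ))
        rw [h, hX] at this
        simp at this
        exact h0 this.symm
      have hdeg : (p.comp (X + C 1)).degree = p.degree := by
        rw [Polynomial.degree_eq_natDegree hcomp0, Polynomial.degree_eq_natDegree hp0,
          Polynomial.natDegree_comp, hX, mul_one]
      have hlc : (p.comp (X + C 1)).leadingCoeff = p.leadingCoeff := by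
        rw [Polynomial.leadingCoeff_comp (by rw [hX]; exact one_ne_zero)]
        rw [(Polynomial.monic_X_add_C (1:ℚ)).leadingCoeff, one_pow, mul_one]
      have hlt : (p.comp (X + C 1) - p).degree < p.degree :=
        hdeg ▸ Polynomial.degree_sub_lt hdeg hcomp0 hlc
      have hdp : p.degree ≤ (d + 1 : ℕ) := Polynomial.degree_le_of_natDegree_le hp
      have : (p.comp (X + C 1) - p).degree < ((d + 1 : ℕ) : WithBot ℕ) := lt_of_lt_of_le hlt hdp
      by_cases hq0 : p.comp (X + C 1) - p = 0
      · rw [hq0]; exact Nat.zero_le d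
      · have := (Polynomial.natDegree_lt_iff_degree_lt hq0).mpr this
        omega

noncomputable def Dm : Module.End ℤ (ℤ → ℚ) := (fwdDiffₗ ℤ ℚ 1)^2 * shiftₗ ℤ ℚ (-1)
noncomputable def D2m : Module.End ℤ (ℤ → ℚ) := (fwdDiffₗ ℤ ℚ 2)^2 * shiftₗ ℤ ℚ (-2)

lemma Dm_apply (f : ℤ → ℚ) (x : ℤ) : Dm f x = f (x+1) - 2 * f x + f (x-1) := by
  simp only [Dm, Module.End.mul_apply, Module.End.pow_apply, iterate_succ, iterate_zero,
    comp_apply, id_eq, coe_fwdDiffₗ]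
  simp only [fwdDiff, shiftₗ_apply, Pi.sub_apply]
  ring_nf

lemma D2m_apply (f : ℤ → ℚ) (x : ℤ) : D2m f x = f (x+2) - 2 * f x + f (x-2) := by
  simp only [D2m, Module.End.mul_apply, Module.End.pow_apply, iterate_succ, iterate_zero,
    comp_apply, id_eq, coe_fwdDiffₗ]
  simp only [fwdDiff, shiftₗ_apply, Pi.sub_apply]
  ring_nf

lemma Dm_eq : D2m = Dm * (Dm + 4) := by
  apply LinearMap.ext; intro f; funext x
  have h4 : ((4 : Module.End ℤ (ℤ → ℚ)) f) = (4:ℤ) • f := by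
    norm_num [← Module.End.intCast_apply]
  rw [Module.End.mul_apply, LinearMap.add_apply, h4, Dm_apply]
  simp only [map_add, map_smul, Pi.add_apply, Pi.smul_apply, Dm_apply, D2m_apply, Pi.mul_apply, Pi.intCast_apply, Pi.ofNat_apply, zsmul_eq_mul, Int.cast_ofNat]
  push_cast
  ring_nf

lemma commDS (h : ℤ) : Commute (fwdDiffₗ ℤ ℚ h) (shiftₗ ℤ ℚ (-h)) := by
  apply LinearMap.ext; intro f; funext x
  simp only [Module.End.mul_apply, coe_fwdDiffₗ, fwdDiff, shiftₗ_apply]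
  ring_nf

lemma gen_pow_apply (h : ℤ) (i : ℕ) (f : ℤ → ℚ) :
    (((fwdDiffₗ ℤ ℚ h)^2 * shiftₗ ℤ ℚ (-h))^i) f 0
      = ∑ m ∈ range (2*i+1), ((-1:ℤ)^(2*i-m) * ((2*i).choose m)) • f ((m:ℤ) * h - i * h) := by
  rw [((commDS h).pow_left 2).mul_pow, ← pow_mul, Module.End.mul_apply]
  have hs : (((shiftₗ ℤ ℚ (-h))^i) f) = fun y => f (y - i * h) := by
    funext y
    rw [shiftₗ_pow_apply]
    congr 1
    simp [sub_eq_add_neg]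
  rw [hs, Module.End.pow_apply, coe_fwdDiffₗ (M := ℤ) (G := ℚ) h,
    fwdDiff_iter_eq_sum_shift h (fun y => f (y - i * h)) (2*i) 0]
  apply Finset.sum_congr rfl
  intro m hm
  congr 1
  simp [sub_eq_add_neg, add_comm]

lemma Dm_pow_g (n i : ℕ) (hn : 1 ≤ n) :
    (Dm^i) (gfun n) 0 = 4^i * cCoeff n i := by
  rw [Dm, gen_pow_apply 1 i]
  have hpts : ∀ m : ℕ, ((-1:ℤ)^(2*i-m) * ((2*i).choose m)) • (gfun n ((m:ℤ) * 1 - i * 1))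
      = (-1:ℚ)^(2*i-m) * ((2*i).choose m) * gfun n ((m:ℤ) - i) := by
    intro m
    rw [zsmul_eq_mul, mul_one, mul_one]
    push_cast
    ring
  simp only [hpts]
  have h4 : (4:ℚ)^i ≠ 0 := by positivity
  have hRHS : (4:ℚ)^i * cCoeff n i
      = 2 * ∑ j ∈ Finset.Icc 1 i, (-1 : ℚ) ^ (i - j) * ((2 * i).choose (i - j)) * (2 * j : ℚ) ^ (2 * n) := by
    rw [cCoeff, ← mul_assoc, mul_comm ((4:ℚ)^i), div_mul_cancel₀ _ h4]
  rw [hRHS]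
  -- split LHS
  rw [range_eq_Ico, ← Finset.sum_Ico_consecutive _ (Nat.zero_le i) (by omega : i ≤ 2*i+1),
    Finset.sum_eq_sum_Ico_succ_bot (by omega : i < 2*i+1)]
  have hg0 : gfun n ((i:ℤ) - i) = 0 := by
    simp only [sub_self, gfun, Int.cast_zero, mul_zero]
    exact zero_pow (by omega)
  rw [hg0, mul_zero, zero_add, ← range_eq_Ico, ← Finset.sum_range_reflect,
    Finset.sum_Ico_eq_sum_range, (by omega : 2*i+1 - (i+1) = i),
    ← Finset.Ico_add_one_right_eq_Icc, Finset.sum_Ico_eq_sum_range, (by omega : i + 1 - 1 = i)]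
  have hA : (∑ t ∈ range i, ((-1:ℚ))^(2*i - (i-1-t)) * (((2*i).choose (i-1-t) : ℕ) : ℚ)
        * gfun n (((i-1-t : ℕ) : ℤ) - (i:ℤ)))
      = ∑ t ∈ range i, (-1:ℚ)^(i - (1+t)) * (((2*i).choose (i-(1+t)) : ℕ) : ℚ)
        * (2 * ((1+t : ℕ) : ℚ))^(2*n) := by
    apply Finset.sum_congr rfl
    intro t ht
    rw [Finset.mem_range] at ht
    rw [(by omega : i - 1 - t = i - (1+t)),
      (by omega : 2*i - (i - (1+t)) = (i - (1+t)) + 2*(1+t)),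
      pow_add, pow_mul, neg_one_sq, one_pow, mul_one,
      (by omega : ((i - (1+t) : ℕ) : ℤ) - (i:ℤ) = -(1+(t:ℤ)))]
    have hgneg : gfun n (-(1+(t:ℤ))) = (2 * ((1+t : ℕ) : ℚ))^(2*n) := by
      show (2 * ((-(1+(t:ℤ)) : ℤ) : ℚ))^(2*n) = _
      push_cast
      rw [(by ring : (2 : ℚ) * -(1 + (t:ℚ)) = -(2 * (1 + t))), Even.neg_pow (even_two_mul n)]
    rw [hgneg]
  have hB : (∑ t ∈ range i, ((-1:ℚ))^(2*i - (i+1+t)) * (((2*i).choose (i+1+t) : ℕ) : ℚ)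
        * gfun n (((i+1+t : ℕ) : ℤ) - (i:ℤ)))
      = ∑ t ∈ range i, (-1:ℚ)^(i - (1+t)) * (((2*i).choose (i-(1+t)) : ℕ) : ℚ)
        * (2 * ((1+t : ℕ) : ℚ))^(2*n) := by
    apply Finset.sum_congr rfl
    intro t ht
    rw [Finset.mem_range] at ht
    rw [(by omega : 2*i - (i+1+t) = i - (1+t)),
      (by rw [← Nat.choose_symm (by omega : i+1+t ≤ 2*i)]; congr 1; omega :
        (2*i).choose (i+1+t) = (2*i).choose (i - (1+t))),
      (by omega : ((i+1+t : ℕ) : ℤ) - (i:ℤ) = 1+(t:ℤ))]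
    have hgpos : gfun n (1+(t:ℤ)) = (2 * ((1+t : ℕ) : ℚ))^(2*n) := by
      show (2 * (((1+(t:ℤ)) : ℤ) : ℚ))^(2*n) = _
      push_cast
      ring
    rw [hgpos]
  rw [hA, hB]
  exact (two_mul _).symm

lemma scale (n k : ℕ) : (D2m^k) (gfun n) 0 = 2^(2*n) * ((Dm^k) (gfun n) 0) := by
  rw [D2m, Dm, gen_pow_apply 2, gen_pow_apply 1, Finset.mul_sum]
  apply Finset.sum_congr rfl
  intro m hm
  rw [zsmul_eq_mul, zsmul_eq_mul]
  have hg : gfun n ((m:ℤ)*2 - k*2) = 2^(2*n) * gfun n ((m:ℤ)*1 - k*1) := by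
    show (2 * ((((m:ℤ)*2 - (k:ℤ)*2) : ℤ) : ℚ))^(2*n)
        = 2^(2*n) * (2 * ((((m:ℤ)*1 - (k:ℤ)*1) : ℤ):ℚ))^(2*n)
    push_cast
    rw [← mul_pow]
    congr 1
    ring
  rw [hg]
  ring

lemma vanish (n i : ℕ) (hn : n < i) : (Dm^i) (gfun n) 0 = 0 := by
  rw [Dm, ((commDS 1).pow_left 2).mul_pow, ← pow_mul, Module.End.mul_apply]
  have hs : (((shiftₗ ℤ ℚ (-1))^i) (gfun n))
      = fun y : ℤ => ((C 2 * (X - C (i:ℚ)))^(2*n)).eval (y:ℚ) := by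
    funext y
    rw [shiftₗ_pow_apply]
    show (2 * (((y + i • (-1:ℤ)) : ℤ) : ℚ))^(2*n) = _
    simp [gfun]
    ring
  rw [hs, Module.End.pow_apply, coe_fwdDiffₗ (M := ℤ) (G := ℚ)]
  have hdeg : ((C (2:ℚ) * (X - C (i:ℚ)))^(2*n)).natDegree ≤ 2*n := by
    refine le_trans (Polynomial.natDegree_pow_le) ?_
    have : (C (2:ℚ) * (X - C (i:ℚ))).natDegree ≤ 1 := by
      refine le_trans (Polynomial.natDegree_mul_le) ?_
      rw [Polynomial.natDegree_C, Polynomial.natDegree_X_sub_C]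
    calc 2*n * (C (2:ℚ) * (X - C (i:ℚ))).natDegree ≤ 2*n*1 := by
          exact Nat.mul_le_mul_left _ this
      _ = 2*n := by omega
  have hzero := fwdDiff_poly_zero (2*n) _ hdeg
  rw [(by omega : 2*i = (2*i - (2*n+1)) + (2*n+1)), Function.iterate_add_apply, hzero]
  have hfix : Δ_[(1:ℤ)] (0 : ℤ → ℚ) = 0 := by
    funext x; simp [fwdDiff]
  rw [Function.iterate_fixed hfix]
  rfl

lemma key1 (k : ℕ) (f : ℤ → ℚ) :
    (D2m^k) f 0 = ∑ r ∈ range (k+1),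
      ((k.choose r : ℚ) * 4^(k-r)) * ((Dm^(k+r)) f 0) := by
  have hcomm4 : Commute Dm (4 : Module.End ℤ (ℤ → ℚ)) := by
    simpa using (Nat.cast_commute (4:ℕ) Dm).symm
  have hD : Commute Dm (Dm + 4) := (Commute.refl Dm).add_right hcomm4
  rw [Dm_eq, hD.mul_pow, hcomm4.add_pow, Finset.mul_sum, LinearMap.sum_apply,
    Finset.sum_apply]
  apply Finset.sum_congr rfl
  intro r hr
  rw [Finset.mem_range] at hr
  have h4pow : ((4 : Module.End ℤ (ℤ → ℚ))^(k-r)) = (((4^(k-r) : ℕ)) : Module.End ℤ (ℤ → ℚ)) := by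
    rw [Nat.cast_pow, Nat.cast_ofNat]
  rw [pow_add, h4pow]
  simp only [Module.End.mul_apply, Module.End.natCast_apply, map_nsmul, Pi.smul_apply,
    smul_eq_mul]
  ring

theorem stmt_12 (n k : ℕ) (hk : 1 ≤ k) (hkn : k ≤ n) :
    ∑ i ∈ Finset.Icc k n, (k.choose (i - k) : ℚ) * cCoeff n i
    = 2 ^ (2 * (n - k)) * cCoeff n k := by
  have hn : 1 ≤ n := le_trans hk hkn
  -- replace cCoeff by operator values
  have hcc : ∀ i : ℕ, 1 ≤ i → cCoeff n i = (Dm^i) (gfun n) 0 / 4^i := by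
    intro i hi
    rw [Dm_pow_g n i hn, mul_comm, mul_div_assoc, div_self (by positivity : (4:ℚ)^i ≠ 0), mul_one]
  have step1 : ∑ i ∈ Finset.Icc k n, (k.choose (i - k) : ℚ) * cCoeff n i
      = ∑ i ∈ Finset.Icc k (n+k), (k.choose (i - k) : ℚ) * ((Dm^i) (gfun n) 0 / 4^i) := by
    rw [Finset.sum_subset (Finset.Icc_subset_Icc_right (by omega : n ≤ n + k))]
    · apply Finset.sum_congr rfl
      intro i hi
      rw [Finset.mem_Icc] at hi
      rw [hcc i (by omega)]
    · intro i hi hni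
      rw [Finset.mem_Icc] at hi
      rw [Finset.mem_Icc] at hni
      rw [hcc i (by omega), vanish n i (by omega), zero_div, mul_zero]
  rw [step1, ← Finset.Ico_add_one_right_eq_Icc, Finset.sum_Ico_eq_sum_range,
    (by omega : n + k + 1 - k = n + 1)]
  have step2 : ∑ r ∈ range (n+1), (k.choose ((k+r) - k) : ℚ) * ((Dm^(k+r)) (gfun n) 0 / 4^(k+r))
      = ∑ r ∈ range (k+1), (k.choose r : ℚ) * ((Dm^(k+r)) (gfun n) 0 / 4^(k+r)) := by
    rw [← Finset.sum_subset (Finset.range_subset_range.mpr (by omega : k+1 ≤ n+1))]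
    · apply Finset.sum_congr rfl
      intro r hr
      rw [Nat.add_sub_cancel_left]
    · intro r hr hkr
      rw [Finset.mem_range] at hr hkr
      rw [Nat.add_sub_cancel_left, Nat.choose_eq_zero_of_lt (by omega : k < r)]
      simp
  rw [step2]
  -- now use key1 and scale
  have h16 : (16:ℚ)^k ≠ 0 := by positivity
  have step3 : ∑ r ∈ range (k+1), (k.choose r : ℚ) * ((Dm^(k+r)) (gfun n) 0 / 4^(k+r))
      = (∑ r ∈ range (k+1), ((k.choose r : ℚ) * 4^(k-r)) * ((Dm^(k+r)) (gfun n) 0)) / 16^k := by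
    rw [Finset.sum_div]
    apply Finset.sum_congr rfl
    intro r hr
    rw [Finset.mem_range] at hr
    have h44 : (4:ℚ)^(k-r) * 4^(k+r) = 16^k := by
      rw [← pow_add, (by omega : k-r + (k+r) = 2*k), pow_mul]
      norm_num
    rw [← mul_div_assoc, div_eq_div_iff (by positivity : (4:ℚ)^(k+r) ≠ 0) h16]
    calc (k.choose r : ℚ) * (Dm^(k+r)) (gfun n) 0 * 16^k
        = (k.choose r : ℚ) * (Dm^(k+r)) (gfun n) 0 * (4^(k-r) * 4^(k+r)) := by rw [h44]
      _ = (k.choose r : ℚ) * 4^(k-r) * (Dm^(k+r)) (gfun n) 0 * 4^(k+r) := by ring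
  rw [step3, ← key1 k (gfun n), scale n k, Dm_pow_g n k hn]
  rw [div_eq_iff h16]
  rw [(by omega : 2*n = 2*(n-k) + 2*k), pow_add]
  have h4 : (4:ℚ)^k = 2^(2*k) := by rw [pow_mul]; norm_num
  have h16' : (16:ℚ)^k = 2^(2*k) * 2^(2*k) := by
    rw [← pow_add, (by omega : 2*k + 2*k = 4*k), pow_mul]; norm_num
  rw [h4, h16']
  ring
end

section
/- Let u(n,k) = ((−1)^n/(2n)!) c(n,k) with c(n,k) = (2/4^k) ∑_{j=1}^{k} (−1)^{k−j} C(2k, k−j) (2j)^{2n}, and let v(n,k) = (−1)^n (2k)! 2^{2(n−k)} h(k,n)/(n² C(2n,n)) with h(1,n)=1 and h(k,n)=∑_{j=k−1}^{n−1} h(k−1,j)/j². Then for every N ≥ 1, the lower-triangular N×N matrices U = (u(n,k)) and V = (v(n,k)) (indices 1..N) satisfy UV = VU = Id, i.e. V is the inverse of U. -/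
open Finset

lemma S_zero : ∀ n : ℕ, ∀ d : ℕ, d < n →
    ∑ i ∈ range (n+1), (-1:ℚ)^i * (n.choose i) * (i:ℚ)^d = 0 := by
  intro n
  induction n with
  | zero => intro d hd; omega
  | succ n ih =>
    intro d hd
    have key : ∑ i ∈ range (n+1+1), (-1:ℚ)^i * ((n+1).choose i) * (i:ℚ)^d
        = ∑ i ∈ range (n+1), (-1:ℚ)^i * (n.choose i) * (i:ℚ)^d
          - ∑ i ∈ range (n+1), (-1:ℚ)^i * (n.choose i) * ((i:ℚ)+1)^d := by
      rw [Finset.sum_range_succ' (fun i => (-1:ℚ)^i * ((n+1).choose i) * (i:ℚ)^d) (n+1)]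
      have t1 : ∀ i ∈ range (n+1), (-1:ℚ)^(i+1) * (((n+1).choose (i+1) : ℕ):ℚ) * (((i+1:ℕ)):ℚ)^d
          = (-1:ℚ)^(i+1) * ((n.choose (i+1) : ℕ):ℚ) * (((i+1:ℕ)):ℚ)^d
            - (-1:ℚ)^i * ((n.choose i : ℕ):ℚ) * ((i:ℚ)+1)^d := by
        intro i _
        rw [Nat.choose_succ_succ]
        push_cast
        ring
      rw [Finset.sum_congr rfl t1, Finset.sum_sub_distrib]
      have e1 := Finset.sum_range_succ' (fun i => (-1:ℚ)^i * ((n.choose i : ℕ):ℚ) * (i:ℚ)^d) (n+1)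
      have e2 := Finset.sum_range_succ (fun i => (-1:ℚ)^i * ((n.choose i : ℕ):ℚ) * (i:ℚ)^d) (n+1)
      rw [e2] at e1
      simp only [Nat.choose_succ_self, Nat.cast_zero, mul_zero, zero_mul, add_zero,
        Nat.choose_zero_right, Nat.cast_one, pow_zero, one_mul, mul_one] at e1 ⊢
      linarith [e1]
    rw [key, ← Finset.sum_sub_distrib]
    have hdiff : ∀ i : ℕ, (i:ℚ)^d - ((i:ℚ)+1)^d
        = - ∑ e ∈ range d, (i:ℚ)^e * (d.choose e) := by
      intro i
      have h := add_pow (i:ℚ) 1 d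
      simp only [one_pow, mul_one] at h
      rw [h, Finset.sum_range_succ]
      simp
    calc ∑ i ∈ range (n+1), ((-1:ℚ)^i * (n.choose i) * (i:ℚ)^d
            - (-1:ℚ)^i * (n.choose i) * ((i:ℚ)+1)^d)
        = ∑ i ∈ range (n+1), ∑ e ∈ range d,
            -((d.choose e : ℚ) * ((-1:ℚ)^i * (n.choose i) * (i:ℚ)^e)) := by
          apply Finset.sum_congr rfl
          intro i _
          have : (-1:ℚ)^i * (n.choose i) * (i:ℚ)^d - (-1:ℚ)^i * (n.choose i) * ((i:ℚ)+1)^d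
              = (-1:ℚ)^i * (n.choose i) * ((i:ℚ)^d - ((i:ℚ)+1)^d) := by ring
          rw [this, hdiff i, mul_neg, Finset.mul_sum, neg_eq_iff_eq_neg, ← Finset.sum_neg_distrib]
          apply Finset.sum_congr rfl
          intro e _
          ring
      _ = ∑ e ∈ range d, -((d.choose e : ℚ) *
            ∑ i ∈ range (n+1), (-1:ℚ)^i * (n.choose i) * (i:ℚ)^e) := by
          rw [Finset.sum_comm]
          apply Finset.sum_congr rfl
          intro e _
          rw [Finset.mul_sum, ← Finset.sum_neg_distrib]
      _ = 0 := by
          apply Finset.sum_eq_zero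
          intro e he
          rw [ih e (by simp only [Finset.mem_range] at he; omega)]
          simp

lemma T_zero (n d : ℕ) (hd : d < n) (a b : ℚ) :
    ∑ i ∈ range (n+1), (-1:ℚ)^i * (n.choose i) * (a - b*(i:ℚ))^d = 0 := by
  have expand : ∀ i : ℕ, (a - b*(i:ℚ))^d
      = ∑ m ∈ range (d+1), ((-b)^m * a^(d-m) * (d.choose m)) * (i:ℚ)^m := by
    intro i
    have h := add_pow ((-b)*(i:ℚ)) a d
    rw [show a - b*(i:ℚ) = (-b)*(i:ℚ) + a by ring, h]
    apply Finset.sum_congr rfl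
    intro m _
    rw [mul_pow]
    ring
  calc ∑ i ∈ range (n+1), (-1:ℚ)^i * (n.choose i) * (a - b*(i:ℚ))^d
      = ∑ i ∈ range (n+1), ∑ m ∈ range (d+1),
          ((-b)^m * a^(d-m) * (d.choose m)) * ((-1:ℚ)^i * (n.choose i) * (i:ℚ)^m) := by
        apply Finset.sum_congr rfl
        intro i _
        rw [expand i, Finset.mul_sum]
        apply Finset.sum_congr rfl
        intro m _
        ring
    _ = ∑ m ∈ range (d+1), ((-b)^m * a^(d-m) * (d.choose m)) *
          ∑ i ∈ range (n+1), (-1:ℚ)^i * (n.choose i) * (i:ℚ)^m := by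
        rw [Finset.sum_comm]
        apply Finset.sum_congr rfl
        intro m _
        rw [Finset.mul_sum]
    _ = 0 := by
        apply Finset.sum_eq_zero
        intro m hm
        rw [S_zero n m (by simp only [Finset.mem_range] at hm; omega)]
        simp

lemma half_zero (k m : ℕ) (h1 : 1 ≤ m) (hm : m < k) :
    ∑ j ∈ Icc 1 k, (-1:ℚ)^(k-j) * (((2*k).choose (k-j) : ℕ):ℚ) * (2*(j:ℚ))^(2*m) = 0 := by
  set g : ℕ → ℚ := fun i => (-1:ℚ)^i * (((2*k).choose i : ℕ):ℚ) * ((2*(k:ℚ)) - 2*(i:ℚ))^(2*m)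
    with hg
  have step1 : ∑ j ∈ Icc 1 k, (-1:ℚ)^(k-j) * (((2*k).choose (k-j) : ℕ):ℚ) * (2*(j:ℚ))^(2*m)
      = ∑ i ∈ range k, g i := by
    apply Finset.sum_nbij' (fun j => k - j) (fun i => k - i)
    · intro j hj; simp only [Finset.mem_Icc] at hj; simp only [Finset.mem_range]; omega
    · intro i hi; simp only [Finset.mem_range] at hi; simp only [Finset.mem_Icc]; omega
    · intro j hj; simp only [Finset.mem_Icc] at hj; omega
    · intro i hi; simp only [Finset.mem_range] at hi; omega
    · intro j hj
      simp only [Finset.mem_Icc] at hj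
      simp only [hg]
      have hc : ((k - j : ℕ):ℚ) = (k:ℚ) - (j:ℚ) := by
        rw [Nat.cast_sub hj.2]
      rw [hc]
      ring_nf
  have step2 : ∑ i ∈ range (2*k+1), g i = 0 := by
    have := T_zero (2*k) (2*m) (by omega) (2*(k:ℚ)) 2
    simpa [hg] using this
  have gk : g k = 0 := by
    simp only [hg]
    have : (2*(k:ℚ) - 2*(k:ℚ)) = 0 := by ring
    rw [this, zero_pow (by omega)]
    ring
  have step3 : ∑ i ∈ Ico (k+1) (2*k+1), g i = ∑ i ∈ range k, g i := by
    apply Finset.sum_nbij' (fun i => 2*k - i) (fun i => 2*k - i)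
    · intro i hi; simp only [Finset.mem_Ico] at hi; simp only [Finset.mem_range]; omega
    · intro i hi; simp only [Finset.mem_range] at hi; simp only [Finset.mem_Ico]; omega
    · intro i hi; simp only [Finset.mem_Ico] at hi; omega
    · intro i hi; simp only [Finset.mem_range] at hi; omega
    · intro i hi
      simp only [Finset.mem_Ico] at hi
      simp only [hg]
      have hsign : ((-1:ℚ))^(2*k - i) = (-1:ℚ)^i := by
        have h1 : ((-1:ℚ))^(2*k - i) * ((-1:ℚ))^i = ((-1:ℚ))^(2*k) := by
          rw [← pow_add]; congr 1; omega
        have h2 : ((-1:ℚ))^(2*k) = 1 := by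
          rw [pow_mul]; norm_num
        have h3 : ((-1:ℚ))^i * ((-1:ℚ))^i = 1 := by
          rw [← pow_add, ← two_mul, pow_mul]; norm_num
        calc ((-1:ℚ))^(2*k - i) = ((-1:ℚ))^(2*k - i) * (((-1:ℚ))^i * ((-1:ℚ))^i) := by
              rw [h3, mul_one]
          _ = (((-1:ℚ))^(2*k - i) * ((-1:ℚ))^i) * ((-1:ℚ))^i := by ring
          _ = ((-1:ℚ))^i := by rw [h1, h2, one_mul]
      have hch : (2*k).choose (2*k - i) = (2*k).choose i := Nat.choose_symm (by omega)
      have hcast : ((2*k - i : ℕ):ℚ) = 2*(k:ℚ) - (i:ℚ) := by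
        rw [Nat.cast_sub (by omega)]; push_cast; ring
      have hneg : (2*(k:ℚ) - 2*((2*k - i : ℕ):ℚ)) = -((2*(k:ℚ)) - 2*(i:ℚ)) := by
        rw [hcast]; ring
      rw [hsign, hch, hneg, Even.neg_pow (even_two_mul m)]
  have split : ∑ i ∈ range (2*k+1), g i
      = (∑ i ∈ range k, g i + g k) + ∑ i ∈ Ico (k+1) (2*k+1), g i := by
    rw [← Finset.sum_range_succ]
    rw [Finset.range_eq_Ico, Finset.range_eq_Ico]
    exact (Finset.sum_Ico_consecutive g (by omega) (by omega)).symm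
  rw [step1]
  rw [step2, gk, add_zero, step3] at split
  linarith [split]

/-- u(n,k) = ((−1)^n/(2n)!) c(n,k). -/
def uEnt (n k : ℕ) : ℚ := (-1 : ℚ) ^ n / ((2 * n).factorial : ℚ) * cCoeff n k

/-- The numbers h(k,n). -/
def hNum : ℕ → ℕ → ℚ
  | 0, _ => 0
  | 1, _ => 1
  | (k + 2), n => ∑ j ∈ Finset.Icc (k + 1) (n - 1), hNum (k + 1) j / (j : ℚ) ^ 2

/-- v(n,k) = (−1)^n (2k)! 2^{2(n−k)} h(k,n) / (n² C(2n,n)) for 1 ≤ k ≤ n, else 0. -/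
def vEnt (n k : ℕ) : ℚ :=
  if 1 ≤ k ∧ k ≤ n then
    (-1 : ℚ) ^ n * ((2 * k).factorial : ℚ) * 2 ^ (2 * (n - k)) /
      ((n : ℚ) ^ 2 * ((2 * n).choose n)) * hNum k n
  else 0

lemma cCoeff_eq_zero {m k : ℕ} (h1 : 1 ≤ m) (hm : m < k) : cCoeff m k = 0 := by
  unfold cCoeff
  rw [show ∑ j ∈ Finset.Icc 1 k,
      (-1 : ℚ) ^ (k - j) * ((2 * k).choose (k - j)) * (2 * j : ℚ) ^ (2 * m)
      = ∑ j ∈ Icc 1 k, (-1:ℚ)^(k-j) * (((2*k).choose (k-j) : ℕ):ℚ) * (2*(j:ℚ))^(2*m) from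
    Finset.sum_congr rfl (fun j _ => by push_cast; ring)]
  rw [half_zero k m h1 hm, mul_zero]

lemma uEnt_eq_zero {m k : ℕ} (h1 : 1 ≤ m) (hm : m < k) : uEnt m k = 0 := by
  rw [uEnt, cCoeff_eq_zero h1 hm, mul_zero]

lemma hNum_zero (n : ℕ) : hNum 0 n = 0 := rfl
lemma hNum_one (n : ℕ) : hNum 1 n = 1 := rfl
lemma hNum_big (k n : ℕ) : hNum (k+2) n = ∑ j ∈ Finset.Icc (k + 1) (n - 1), hNum (k + 1) j / (j : ℚ) ^ 2 := rfl

lemma hNum_eq_zero {k n : ℕ} (hk : 2 ≤ k) (hn : n < k) : hNum k n = 0 := by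
  obtain ⟨k', rfl⟩ : ∃ k', k = k'+2 := ⟨k-2, by omega⟩
  rw [hNum_big, Finset.Icc_eq_empty (by omega), Finset.sum_empty]

lemma hNum_succ (k n : ℕ) : hNum (k+1) (n+1) = hNum (k+1) n + hNum k n / (n:ℚ)^2 := by
  cases k with
  | zero => rw [hNum_one, hNum_one, hNum_zero, zero_div, add_zero]
  | succ k' =>
    rw [hNum_big, hNum_big, show n+1-1 = n from rfl]
    by_cases hkn : k'+1 ≤ n
    · obtain ⟨b, rfl⟩ : ∃ b, n = b+1 := ⟨n-1, by omega⟩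
      rw [Finset.sum_Icc_succ_top (by omega : k'+1 ≤ b+1), show b+1-1 = b from rfl]
    · rw [Finset.Icc_eq_empty (by omega), Finset.Icc_eq_empty (by omega),
        Finset.sum_empty, zero_add]
      rcases Nat.eq_zero_or_pos k' with hk' | hk'
      · subst hk'
        have : n = 0 := by omega
        subst this
        simp [hNum_one]
      · rw [hNum_eq_zero (by omega) (by omega), zero_div]

/-- generating function -/
def Ff (n : ℕ) (x : ℚ) : ℚ := ∑ m ∈ range (n+1), hNum m n * x^m

lemma F_succ (n : ℕ) (hn : 1 ≤ n) (x : ℚ) : Ff (n+1) x = Ff n x * (1 + x/(n:ℚ)^2) := by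
  rw [Ff, Finset.sum_range_succ' (fun m => hNum m (n+1) * x^m) (n+1)]
  rw [hNum_zero, zero_mul, add_zero]
  have t1 : ∀ m ∈ range (n+1), hNum (m+1) (n+1) * x^(m+1)
      = hNum (m+1) n * x^(m+1) + (hNum m n * x^m) * (x/(n:ℚ)^2) := by
    intro m _
    rw [hNum_succ]
    field_simp
    ring
  rw [Finset.sum_congr rfl t1, Finset.sum_add_distrib, ← Finset.sum_mul]
  have t2 : ∑ m ∈ range (n+1), hNum (m+1) n * x^(m+1) = Ff n x := by
    have e := Finset.sum_range_succ' (fun m => hNum m n * x^m) (n+1)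
    rw [Finset.sum_range_succ] at e
    rw [hNum_eq_zero (by omega) (by omega), zero_mul, add_zero] at e
    rw [hNum_zero, zero_mul, add_zero] at e
    rw [Ff]
    exact e.symm
  rw [t2, Ff]
  ring

lemma F_prod : ∀ n : ℕ, 1 ≤ n → ∀ x : ℚ, Ff n x = x * ∏ i ∈ Icc 1 (n-1), (1 + x/(i:ℚ)^2) := by
  intro n
  induction n with
  | zero => intro h; omega
  | succ n ih =>
    intro _ x
    rcases Nat.eq_zero_or_pos n with hn | hn
    · subst hn
      simp only [Nat.add_sub_cancel, Finset.Icc_eq_empty (by omega : ¬ (1:ℕ) ≤ 0), Finset.prod_empty, mul_one]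
      rw [Ff]
      rw [Finset.sum_range_succ, Finset.sum_range_succ, Finset.sum_range_zero, hNum_zero, hNum_one]
      ring
    · rw [F_succ n hn x, ih hn x, Nat.add_sub_cancel]
      obtain ⟨b, rfl⟩ : ∃ b, n = b+1 := ⟨n-1, by omega⟩
      rw [Finset.prod_Icc_succ_top (by omega : 1 ≤ b+1), show b+1-1 = b from rfl]
      ring

lemma F_eval_zero {j n : ℕ} (hj1 : 1 ≤ j) (hjn : j ≤ n - 1) (hn : 1 ≤ n) :
    Ff n (-(j:ℚ)^2) = 0 := by
  rw [F_prod n hn]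
  have : ∏ i ∈ Icc 1 (n-1), (1 + (-(j:ℚ)^2)/(i:ℚ)^2) = 0 := by
    apply Finset.prod_eq_zero (Finset.mem_Icc.mpr ⟨hj1, hjn⟩)
    have hj0 : ((j:ℚ)) ≠ 0 := by positivity
    field_simp
    norm_num
  rw [this, mul_zero]

lemma prod_Icc_id (m : ℕ) : ∏ i ∈ Icc 1 m, i = m.factorial := by
  rw [← Finset.Ico_add_one_right_eq_Icc, Finset.prod_Ico_eq_prod_range]
  rw [show m+1-1 = m from rfl]
  rw [show (fun i => 1 + i) = (fun i => i + 1) from funext fun i => by omega]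
  exact Finset.prod_range_add_one_eq_factorial m

lemma prod_sub (n : ℕ) : ∏ i ∈ Icc 1 (n-1), (n - i) = (n-1).factorial := by
  rw [← prod_Icc_id (n-1)]
  apply Finset.prod_nbij' (fun i => n - i) (fun i => n - i)
  · intro i hi; simp only [Finset.mem_Icc] at hi ⊢; omega
  · intro i hi; simp only [Finset.mem_Icc] at hi ⊢; omega
  · intro i hi; simp only [Finset.mem_Icc] at hi; omega
  · intro i hi; simp only [Finset.mem_Icc] at hi; omega
  · intro i hi; rfl

lemma prod_add (n : ℕ) (hn : 1 ≤ n) :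
    n.factorial * ∏ i ∈ Icc 1 (n-1), (n + i) = (2*n-1).factorial := by
  have h1 : ∏ i ∈ Icc 1 (n-1), (n + i) = ∏ j ∈ Ioc n (2*n-1), j := by
    apply Finset.prod_nbij' (fun i => n + i) (fun j => j - n)
    · intro i hi; simp only [Finset.mem_Icc] at hi; simp only [Finset.mem_Ioc]; omega
    · intro j hj; simp only [Finset.mem_Ioc] at hj; simp only [Finset.mem_Icc]; omega
    · intro i hi; simp only [Finset.mem_Icc] at hi; omega
    · intro j hj; simp only [Finset.mem_Ioc] at hj; omega
    · intro i hi; rfl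
  rw [h1, ← prod_Icc_id n, ← prod_Icc_id (2*n-1)]
  have hcons := Finset.prod_Ioc_consecutive (fun i : ℕ => i) (Nat.zero_le n)
    (by omega : n ≤ 2*n-1)
  have hIcc : ∀ m : ℕ, Ioc 0 m = Icc 1 m := fun m => (Finset.Icc_add_one_left_eq_Ioc 0 m).symm
  rw [hIcc, hIcc] at hcons
  exact hcons

lemma F_eval_diag (n : ℕ) (hn : 1 ≤ n) :
    Ff n (-(n:ℚ)^2) = (-1:ℚ)^n * (n:ℚ)^2 * (((2*n).choose n : ℕ):ℚ) / 2 := by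
  rw [F_prod n hn]
  have hfn1 : (((n-1).factorial : ℕ):ℚ) ≠ 0 := by
    exact_mod_cast Nat.cast_ne_zero.mpr (Nat.factorial_ne_zero _)
  have hfn : ((n.factorial : ℕ):ℚ) ≠ 0 := by
    exact_mod_cast Nat.cast_ne_zero.mpr (Nat.factorial_ne_zero _)
  have hN : ((n:ℕ):ℚ) ≠ 0 := by
    exact_mod_cast Nat.cast_ne_zero.mpr (by omega)
  set A : ℕ := ∏ i ∈ Icc 1 (n-1), (n + i) with hA
  have step1 : ∀ i ∈ Icc 1 (n-1), (1 + (-(n:ℚ)^2)/(i:ℚ)^2)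
      = (-1:ℚ) * ((((n-i)*(n+i) : ℕ)):ℚ) / ((i:ℕ):ℚ)^2 := by
    intro i hi
    simp only [Finset.mem_Icc] at hi
    have hi0 : ((i:ℕ):ℚ) ≠ 0 := Nat.cast_ne_zero.mpr (by omega)
    have hc : ((((n-i)*(n+i) : ℕ)):ℚ) = ((n:ℚ) - i) * ((n:ℚ) + i) := by
      push_cast [Nat.cast_sub (by omega : i ≤ n)]
      ring
    rw [hc]
    field_simp
    ring
  have step2 : ∏ i ∈ Icc 1 (n-1), (1 + (-(n:ℚ)^2)/(i:ℚ)^2)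
      = (-1:ℚ)^(n-1) * (((n-1).factorial : ℕ):ℚ) * (A:ℚ) / (((n-1).factorial : ℕ):ℚ)^2 := by
    rw [Finset.prod_congr rfl step1, Finset.prod_div_distrib, Finset.prod_mul_distrib]
    rw [Finset.prod_const, Nat.card_Icc]
    rw [show n-1+1-1 = n-1 from rfl, Finset.prod_pow, ← Nat.cast_prod,
      Finset.prod_mul_distrib, prod_sub, ← hA, ← Nat.cast_prod, prod_Icc_id]
    push_cast
    ring
  rw [step2]
  -- arithmetic identities
  have f1 : (((2*n).choose n : ℕ):ℚ) * (n.factorial:ℚ) * (n.factorial:ℚ)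
      = ((2*n).factorial : ℚ) := by
    have h := Nat.choose_mul_factorial_mul_factorial (by omega : n ≤ 2*n)
    rw [show 2*n - n = n by omega] at h
    exact_mod_cast congrArg (Nat.cast : ℕ → ℚ) h
  have e2 : (2*n-1)+1 = 2*n := by omega
  have f2 : ((2*n).factorial : ℚ) = 2*(n:ℚ) * (((2*n-1).factorial):ℚ) := by
    calc ((2*n).factorial : ℚ) = (((2*n-1)+1).factorial : ℚ) := by rw [e2]
      _ = ((((2*n-1)+1 : ℕ)):ℚ) * ((2*n-1).factorial : ℚ) := by
          rw [Nat.factorial_succ]; push_cast; ring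
      _ = 2*(n:ℚ) * ((2*n-1).factorial : ℚ) := by rw [e2]; push_cast; ring
  have e3 : (n-1)+1 = n := by omega
  have f3 : (n.factorial : ℚ) = (n:ℚ) * ((n-1).factorial : ℚ) := by
    calc (n.factorial : ℚ) = (((n-1)+1).factorial : ℚ) := by rw [e3]
      _ = ((((n-1)+1 : ℕ)):ℚ) * ((n-1).factorial : ℚ) := by
          rw [Nat.factorial_succ]; push_cast; ring
      _ = (n:ℚ) * ((n-1).factorial : ℚ) := by rw [e3]
  have f4 : (n.factorial:ℚ) * (A:ℚ) = (((2*n-1).factorial):ℚ) := by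
    exact_mod_cast congrArg (Nat.cast : ℕ → ℚ) (prod_add n hn)
  have key : (((2*n).choose n : ℕ):ℚ) * (((n-1).factorial : ℕ):ℚ) = 2 * (A:ℚ) := by
    apply mul_left_cancel₀ (mul_ne_zero (pow_ne_zero 2 hN) hfn1)
    have h5 : (((2*n).choose n : ℕ):ℚ) * (n.factorial:ℚ) * (n.factorial:ℚ)
        = 2*(n:ℚ) * ((n.factorial:ℚ) * (A:ℚ)) := by rw [f1, f2, f4]
    rw [f3] at h5
    linear_combination h5
  have hsgn : (-1:ℚ)^n = (-1:ℚ)^(n-1) * (-1) := by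
    rw [← pow_succ]
    congr 1
    omega
  rw [hsgn]
  field_simp
  linear_combination key

lemma key_sum (n k : ℕ) (hk : 1 ≤ k) (hkn : k ≤ n) :
    ∑ m ∈ Icc k n, vEnt n m * uEnt m k = if n = k then 1 else 0 := by
  have hn : 1 ≤ n := le_trans hk hkn
  have hC : (((2*n).choose n : ℕ):ℚ) ≠ 0 :=
    Nat.cast_ne_zero.mpr (Nat.choose_pos (by omega)).ne'
  have hN : ((n:ℕ):ℚ) ≠ 0 := Nat.cast_ne_zero.mpr (by omega)
  set K : ℚ := (-1:ℚ)^n * 2 * 4^n / ((n:ℚ)^2 * (((2*n).choose n:ℕ):ℚ) * 4^k) with hK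
  -- step 1 : extend the summation range
  have ext : ∑ m ∈ Icc k n, vEnt n m * uEnt m k = ∑ m ∈ Icc 1 n, vEnt n m * uEnt m k := by
    apply Finset.sum_subset
    · intro m hm; simp only [Finset.mem_Icc] at *; omega
    · intro m hm hm'
      simp only [Finset.mem_Icc] at hm hm'
      rw [uEnt_eq_zero hm.1 (by omega), mul_zero]
  rw [ext]
  -- step 2 : termwise rewriting
  have term : ∀ m ∈ Icc 1 n, vEnt n m * uEnt m k
      = K * ∑ j ∈ Icc 1 k, (-1:ℚ)^(k-j) * (((2*k).choose (k-j):ℕ):ℚ)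
          * (hNum m n * (-((j:ℚ)^2))^m) := by
    intro m hm
    simp only [Finset.mem_Icc] at hm
    rw [vEnt, if_pos ⟨hm.1, hm.2⟩, uEnt, cCoeff]
    have hfm : (((2*m).factorial : ℕ):ℚ) ≠ 0 :=
      Nat.cast_ne_zero.mpr (Nat.factorial_ne_zero _)
    rw [Finset.mul_sum, Finset.mul_sum, Finset.mul_sum, Finset.mul_sum]
    apply Finset.sum_congr rfl
    intro j hj
    have h4 : (2:ℚ)^(2*(n-m)) * 4^m = 4^n := by
      rw [show (2:ℚ)^(2*(n-m)) = 4^(n-m) by rw [pow_mul]; norm_num, ← pow_add]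
      congr 1
      omega
    have hjm : ((2:ℚ)*(j:ℚ))^(2*m) = 4^m * ((j:ℚ)^2)^m := by
      rw [mul_pow, pow_mul, pow_mul]
      norm_num
    have hneg : (-((j:ℚ)^2))^m = (-1:ℚ)^m * ((j:ℚ)^2)^m := by
      rw [neg_pow]
    have h4' : (2:ℚ)^(2*(n-m)) = 4^n / 4^m := by
      rw [eq_div_iff (by positivity : (4:ℚ)^m ≠ 0)]
      exact h4
    rw [hK, h4', hjm, hneg]
    field_simp
  rw [Finset.sum_congr rfl term, ← Finset.mul_sum, Finset.sum_comm]
  have FfIcc : ∀ x:ℚ, ∑ m ∈ Icc 1 n, hNum m n * x^m = Ff n x := by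
    intro x
    rw [Ff, Finset.range_eq_Ico, Finset.Ico_add_one_right_eq_Icc]
    rw [show Icc 0 n = insert 0 (Icc 1 n) from by ext a; simp; omega]
    rw [Finset.sum_insert (by simp), hNum_zero]
    simp
  have pull : ∀ j ∈ Icc 1 k,
      ∑ m ∈ Icc 1 n, (-1:ℚ)^(k-j) * (((2*k).choose (k-j):ℕ):ℚ) * (hNum m n * (-((j:ℚ)^2))^m)
      = (-1:ℚ)^(k-j) * (((2*k).choose (k-j):ℕ):ℚ) * Ff n (-((j:ℚ)^2)) := by
    intro j _
    rw [← FfIcc, Finset.mul_sum]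
  rw [Finset.sum_congr rfl pull]
  by_cases hnk : n = k
  · subst hnk
    rw [if_pos rfl]
    obtain ⟨b, rfl⟩ : ∃ b, n = b+1 := ⟨n-1, by omega⟩
    rw [Finset.sum_Icc_succ_top (by omega : 1 ≤ b+1)]
    have hzero : ∑ j ∈ Icc 1 b, (-1:ℚ)^(b+1-j) * ((((2*(b+1)).choose (b+1-j)):ℕ):ℚ)
        * Ff (b+1) (-((j:ℚ)^2)) = 0 := by
      apply Finset.sum_eq_zero
      intro j hj
      simp only [Finset.mem_Icc] at hj
      rw [F_eval_zero hj.1 (by omega) (by omega), mul_zero]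
    rw [hzero, zero_add, Nat.sub_self, pow_zero, Nat.choose_zero_right, Nat.cast_one,
      one_mul, one_mul, F_eval_diag (b+1) (by omega), hK]
    have hsq : ((-1:ℚ)^(b+1)) * ((-1:ℚ)^(b+1)) = 1 := by
      rw [← pow_add, ← two_mul, pow_mul]
      norm_num
    field_simp
    linear_combination hsq
  · rw [if_neg hnk]
    have hzero : ∑ j ∈ Icc 1 k, (-1:ℚ)^(k-j) * ((((2*k).choose (k-j)):ℕ):ℚ)
        * Ff n (-((j:ℚ)^2)) = 0 := by
      apply Finset.sum_eq_zero
      intro j hj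
      simp only [Finset.mem_Icc] at hj
      rw [F_eval_zero hj.1 (by omega) (by omega), mul_zero]
    rw [hzero, mul_zero]

theorem stmt_15 (N : ℕ) (hN : 1 ≤ N) :
    let U : Matrix (Fin N) (Fin N) ℚ :=
      fun n k => if (k : ℕ) ≤ (n : ℕ) then uEnt ((n : ℕ) + 1) ((k : ℕ) + 1) else 0
    let V : Matrix (Fin N) (Fin N) ℚ :=
      fun n k => if (k : ℕ) ≤ (n : ℕ) then vEnt ((n : ℕ) + 1) ((k : ℕ) + 1) else 0
    U * V = 1 ∧ V * U = 1 := by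
  intro U V
  have hU : U = fun (n k : Fin N) =>
      if (k : ℕ) ≤ (n : ℕ) then uEnt ((n : ℕ) + 1) ((k : ℕ) + 1) else 0 := rfl
  have hV : V = fun (n k : Fin N) =>
      if (k : ℕ) ≤ (n : ℕ) then vEnt ((n : ℕ) + 1) ((k : ℕ) + 1) else 0 := rfl
  have hVU : V * U = 1 := by
    ext n k
    rw [Matrix.mul_apply, Matrix.one_apply, hU, hV]
    simp only []
    rw [Fin.sum_univ_eq_sum_range (fun m =>
      (if m ≤ (n:ℕ) then vEnt ((n:ℕ)+1) (m+1) else 0) *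
      (if (k:ℕ) ≤ m then uEnt (m+1) ((k:ℕ)+1) else 0)) N]
    by_cases hkn : (k:ℕ) ≤ (n:ℕ)
    · have h1 : ∀ m ∈ range N,
          (if m ≤ (n:ℕ) then vEnt ((n:ℕ)+1) (m+1) else 0) *
            (if (k:ℕ) ≤ m then uEnt (m+1) ((k:ℕ)+1) else 0)
          = if m ∈ Icc (k:ℕ) (n:ℕ) then vEnt ((n:ℕ)+1) (m+1) * uEnt (m+1) ((k:ℕ)+1) else 0 := by
        intro m _
        rw [ite_zero_mul_ite_zero]
        apply if_congr _ rfl rfl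
        rw [Finset.mem_Icc]
        tauto
      rw [Finset.sum_congr rfl h1, Finset.sum_ite_mem]
      have h2 : range N ∩ Icc (k:ℕ) (n:ℕ) = Icc (k:ℕ) (n:ℕ) := by
        ext a
        simp only [Finset.mem_inter, Finset.mem_range, Finset.mem_Icc]
        have := n.isLt
        omega
      rw [h2]
      have shift : ∑ m ∈ Icc (k:ℕ) (n:ℕ), vEnt ((n:ℕ)+1) (m+1) * uEnt (m+1) ((k:ℕ)+1)
          = ∑ m ∈ Icc ((k:ℕ)+1) ((n:ℕ)+1), vEnt ((n:ℕ)+1) m * uEnt m ((k:ℕ)+1) := by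
        apply Finset.sum_nbij' (fun m => m+1) (fun m => m-1)
        · intro m hm; simp only [Finset.mem_Icc] at *; omega
        · intro m hm; simp only [Finset.mem_Icc] at *; omega
        · intro m hm; simp only [Finset.mem_Icc] at hm; omega
        · intro m hm; simp only [Finset.mem_Icc] at hm; omega
        · intro m hm; rfl
      rw [shift, key_sum ((n:ℕ)+1) ((k:ℕ)+1) (by omega) (by omega)]
      apply if_congr _ rfl rfl
      rw [Fin.ext_iff]
      omega
    · rw [Finset.sum_eq_zero, if_neg]
      · intro hnk
        exact hkn (by rw [hnk])
      · intro m _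
        by_cases h1 : m ≤ (n:ℕ)
        · simp [show ¬ (k:ℕ) ≤ m from by omega]
        · rw [if_neg h1, zero_mul]
  exact ⟨mul_eq_one_comm.mpr hVU, hVU⟩
end

section
/- Let N ≥ 1 and let U be the N×N matrix with entries u(n,k) = ((−1)^n/(2n)!) c(n,k), c(n,k) = (2/4^k) ∑_{j=1}^{k} (−1)^{k−j} C(2k, k−j) (2j)^{2n}. Let L be the N×N lower triangular matrix with l(n,k) = 2^{2k+1} C(k, n−k) for k ≤ n ≤ min(2k, N) and 0 otherwise, and let D be the diagonal matrix with d(i,i) = 2^{2i+1}. Then UL = DU. -/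
open Polynomial Finset

/-- coefficient of (X-1)^N -/
lemma coeffXsub (N s : ℕ) : ((X - 1 : ℚ[X]) ^ N).coeff s = (-1)^(N-s) * (N.choose s) := by
  have h : (X - 1 : ℚ[X]) = X + C (-1) := by simp [sub_eq_add_neg]
  rw [h, coeff_X_add_C_pow]

lemma coeffsq (N e : ℕ) : ((X^2 - 1 : ℚ[X]) ^ N).coeff e
    = if 2 ∣ e then ((X - 1 : ℚ[X])^N).coeff (e/2) else 0 := by
  have h1 : (X^2 - 1 : ℚ[X])^N = ∑ r ∈ range (N+1), C ((-1:ℚ)^(N-r) * N.choose r) * X^(2*r) := by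
    rw [sub_eq_add_neg, add_pow]
    apply sum_congr rfl
    intro r hr
    rw [← pow_mul, map_mul, map_pow, map_neg, map_one, map_natCast]
    ring
  rw [h1, finset_sum_coeff]
  simp only [coeff_C_mul, coeff_X_pow]
  by_cases h : 2 ∣ e
  · obtain ⟨t, rfl⟩ := h
    have hiff : ∀ r : ℕ, (2*t = 2*r) ↔ (t = r) := by intro r; omega
    simp only [hiff]
    simp only [mul_ite, mul_one, mul_zero]
    rw [Finset.sum_ite_eq (range (N+1)) t (fun r => (-1:ℚ)^(N-r) * N.choose r)]
    have h2 : (2*t) / 2 = t := by omega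
    rw [h2, coeffXsub, if_pos (Dvd.intro t rfl)]
    by_cases ht : t ∈ range (N+1)
    · rw [if_pos ht]
    · rw [if_neg ht]
      have hNt : N < t := by simpa using ht
      rw [Nat.choose_eq_zero_of_lt hNt]
      simp
  · rw [if_neg h]
    apply Finset.sum_eq_zero
    intro r hr
    rw [if_neg, mul_zero]
    intro he; exact h ⟨r, he⟩

lemma cCoeff_repr (n k J : ℕ) (hJ : k ≤ J) :
    cCoeff n k = (2/4^k) * ∑ j ∈ Icc 1 J,
      ((X-1:ℚ[X])^(2*k)).coeff (k+j) * (2 * (j:ℚ))^(2*n) := by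
  unfold cCoeff
  congr 1
  rw [← Finset.sum_subset (Finset.Icc_subset_Icc_right hJ)
    (fun j hj hj' => ?_)]
  · apply Finset.sum_congr rfl
    intro j hj
    obtain ⟨hj1, hj2⟩ := Finset.mem_Icc.mp hj
    rw [coeffXsub]
    have h1 : 2*k - (k+j) = k - j := by omega
    have h2 : (2*k).choose (k+j) = (2*k).choose (k-j) := by
      rw [← h1, Nat.choose_symm (by omega)]
    rw [h1, h2]
  · -- j ∈ Icc 1 J, j ∉ Icc 1 k : coeff vanishes
    have hj1 : 1 ≤ j := (Finset.mem_Icc.mp hj).1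
    have hjk : k < j := by
      by_contra hc
      exact hj' (Finset.mem_Icc.mpr ⟨hj1, by omega⟩)
    have hdeg : ((X-1:ℚ[X])^(2*k)).natDegree < k + j := by
      have : ((X-1:ℚ[X])^(2*k)).natDegree = 2*k := by
        rw [natDegree_pow]
        have : (X-1:ℚ[X]) = X - C 1 := by simp
        rw [this, natDegree_X_sub_C]; ring
      omega
    rw [coeff_eq_zero_of_natDegree_lt hdeg, zero_mul]

lemma polyid (m : ℕ) :
    ∑ i ∈ range (m+1), C ((m.choose i : ℚ)) * (4*X)^(m-i) * ((X-1:ℚ[X])^2)^(m+i)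
      = (X^2-1)^(2*m) := by
  have h : ∀ i ∈ range (m+1), C ((m.choose i : ℚ)) * (4*X)^(m-i) * ((X-1:ℚ[X])^2)^(m+i)
      = ((X-1:ℚ[X])^2)^m * (((X-1:ℚ[X])^2)^i * (4*X)^(m-i) * (m.choose i : ℚ[X])) := by
    intro i hi
    rw [pow_add, map_natCast]
    ring
  rw [Finset.sum_congr rfl h, ← Finset.mul_sum, ← add_pow]
  have h2 : ((X-1:ℚ[X])^2 + 4*X) = (X+1)^2 := by ring
  rw [h2, ← mul_pow]
  have h3 : (X-1:ℚ[X])^2 * (X+1)^2 = (X^2-1)^2 := by ring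
  rw [h3, ← pow_mul]

lemma claim1 (m j : ℕ) :
    ∑ i ∈ range (m+1), (m.choose i : ℚ) * 4^(m-i) * ((X-1:ℚ[X])^(2*(m+i))).coeff (m+i+j)
      = ((X^2-1:ℚ[X])^(2*m)).coeff (2*m+j) := by
  rw [← polyid, finset_sum_coeff]
  apply Finset.sum_congr rfl
  intro i hi
  have hi' : i ≤ m := by
    have := Finset.mem_range.mp hi; omega
  have he : C ((m.choose i : ℚ)) * (4*X)^(m-i) * ((X-1:ℚ[X])^2)^(m+i)
      = C ((m.choose i : ℚ) * 4^(m-i)) * (X^(m-i) * (X-1:ℚ[X])^(2*(m+i))) := by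
    rw [map_mul, mul_pow, pow_mul]
    have : ((4:ℚ[X]))^(m-i) = C ((4:ℚ)^(m-i)) := by
      rw [map_pow, map_ofNat]
    rw [this]; ring
  rw [he, coeff_C_mul]
  have hexp : 2*m+j = (m+i+j) + (m-i) := by omega
  rw [hexp, coeff_X_pow_mul]

lemma sumfilter (m : ℕ) (f : ℕ → ℚ) :
    ∑ j ∈ Icc 1 (2*m), (if 2 ∣ j then f j else 0) = ∑ t ∈ Icc 1 m, f (2*t) := by
  rw [← Finset.sum_filter]
  have h : Finset.filter (fun j => 2 ∣ j) (Icc 1 (2*m))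
      = Finset.image (fun t => 2*t) (Icc 1 m) := by
    ext j
    simp only [Finset.mem_filter, Finset.mem_image, Finset.mem_Icc]
    constructor
    · rintro ⟨⟨h1, h2⟩, t, rfl⟩
      exact ⟨t, by omega, rfl⟩
    · rintro ⟨t, ⟨h1, h2⟩, rfl⟩
      exact ⟨by omega, ⟨t, rfl⟩⟩
  rw [h, Finset.sum_image (fun x _ y _ hxy => by omega)]

lemma main_id (n m : ℕ) (hm : 1 ≤ m) :
    (2:ℚ)^(2*m+1) * ∑ i ∈ range (m+1), (m.choose i : ℚ) * cCoeff n (m+i)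
      = 2^(2*n+1) * cCoeff n m := by
  have hrepr : ∀ i ∈ range (m+1), (m.choose i : ℚ) * cCoeff n (m+i)
      = (2/4^(2*m)) * ((m.choose i : ℚ) * 4^(m-i) *
          ∑ j ∈ Icc 1 (2*m), ((X-1:ℚ[X])^(2*(m+i))).coeff (m+i+j) * (2 * (j:ℚ))^(2*n)) := by
    intro i hi
    have hi' : i ≤ m := by have := Finset.mem_range.mp hi; omega
    rw [cCoeff_repr n (m+i) (2*m) (by omega)]
    set S : ℚ := ∑ j ∈ Icc 1 (2*m), ((X-1:ℚ[X])^(2*(m+i))).coeff (m+i+j) * (2 * (j:ℚ))^(2*n) with hSdef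
    have h4 : (4:ℚ)^(m-i) * 4^(m+i) = 4^(2*m) := by
      rw [← pow_add]; congr 1; omega
    have h40 : (4:ℚ)^(m+i) ≠ 0 := by positivity
    have h40' : (4:ℚ)^(2*m) ≠ 0 := by positivity
    field_simp
    linear_combination (-((m.choose i : ℚ) * S)) * h4
  rw [Finset.sum_congr rfl hrepr, ← Finset.mul_sum]
  have hswap : ∑ i ∈ range (m+1), ((m.choose i : ℚ) * 4^(m-i) *
        ∑ j ∈ Icc 1 (2*m), ((X-1:ℚ[X])^(2*(m+i))).coeff (m+i+j) * (2 * (j:ℚ))^(2*n))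
      = ∑ j ∈ Icc 1 (2*m), (∑ i ∈ range (m+1), (m.choose i : ℚ) * 4^(m-i) *
          ((X-1:ℚ[X])^(2*(m+i))).coeff (m+i+j)) * (2 * (j:ℚ))^(2*n) := by
    calc ∑ i ∈ range (m+1), ((m.choose i : ℚ) * 4^(m-i) *
        ∑ j ∈ Icc 1 (2*m), ((X-1:ℚ[X])^(2*(m+i))).coeff (m+i+j) * (2 * (j:ℚ))^(2*n))
        = ∑ i ∈ range (m+1), ∑ j ∈ Icc 1 (2*m), (m.choose i : ℚ) * 4^(m-i) *
            ((X-1:ℚ[X])^(2*(m+i))).coeff (m+i+j) * (2 * (j:ℚ))^(2*n) := by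
          apply Finset.sum_congr rfl; intro i _
          rw [Finset.mul_sum]; apply Finset.sum_congr rfl; intro j _; ring
      _ = ∑ j ∈ Icc 1 (2*m), ∑ i ∈ range (m+1), (m.choose i : ℚ) * 4^(m-i) *
            ((X-1:ℚ[X])^(2*(m+i))).coeff (m+i+j) * (2 * (j:ℚ))^(2*n) := Finset.sum_comm
      _ = _ := by
          apply Finset.sum_congr rfl; intro j _
          rw [Finset.sum_mul]
  rw [hswap]
  have hc1 : ∀ j ∈ Icc 1 (2*m), (∑ i ∈ range (m+1), (m.choose i : ℚ) * 4^(m-i) *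
        ((X-1:ℚ[X])^(2*(m+i))).coeff (m+i+j)) * (2 * (j:ℚ))^(2*n)
      = if 2 ∣ j then ((X-1:ℚ[X])^(2*m)).coeff (m + j/2) * (2 * (j:ℚ))^(2*n) else 0 := by
    intro j _
    rw [claim1, coeffsq]
    by_cases h2 : 2 ∣ j
    · have hd : 2 ∣ 2*m + j := by omega
      have he : (2*m+j)/2 = m + j/2 := by omega
      rw [if_pos hd, if_pos h2, he]
    · have hd : ¬ 2 ∣ 2*m + j := by omega
      rw [if_neg hd, if_neg h2, zero_mul]
  rw [Finset.sum_congr rfl hc1,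
    sumfilter m (fun j => ((X-1:ℚ[X])^(2*m)).coeff (m + j/2) * (2 * (j:ℚ))^(2*n))]
  have hc2 : ∀ t ∈ Icc 1 m, ((X-1:ℚ[X])^(2*m)).coeff (m + (2*t)/2) * (2 * ((2*t : ℕ):ℚ))^(2*n)
      = 4^n * (((X-1:ℚ[X])^(2*m)).coeff (m + t) * (2 * (t:ℚ))^(2*n)) := by
    intro t _
    have h1 : (2*t)/2 = t := by omega
    have h2 : (2 * ((2*t : ℕ):ℚ)) = 2 * (2 * (t:ℚ)) := by push_cast; ring
    rw [h1, h2, mul_pow 2 (2*(t:ℚ)), ]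
    have h3 : (2:ℚ)^(2*n) = 4^n := by
      rw [pow_mul]; norm_num
    rw [h3]; ring
  rw [Finset.sum_congr rfl hc2, ← Finset.mul_sum]
  have hr := cCoeff_repr n m m le_rfl
  have h4m : (4:ℚ)^m ≠ 0 := by positivity
  have hS : ∑ t ∈ Icc 1 m, ((X-1:ℚ[X])^(2*m)).coeff (m + t) * (2 * (t:ℚ))^(2*n)
      = (4^m/2) * cCoeff n m := by
    rw [hr]
    field_simp
  rw [hS]
  have hnum : (2:ℚ)^(2*m+1) * (2/4^(2*m)) * (4^n * ((4^m/2) * cCoeff n m))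
      = 2^(2*n+1) * cCoeff n m := by
    have h4 : (4:ℚ) = 2^2 := by norm_num
    have e1 : (2:ℚ)^(2*m+1) * 2 * 4^n * 4^m = 2^(4*m + 2*n + 2) := by
      rw [h4, ← pow_mul, ← pow_mul, ← pow_succ, ← pow_add, ← pow_add]
      congr 1; omega
    have e2 : (2:ℚ)^(2*n+1) * 4^(2*m) * 2 = 2^(4*m + 2*n + 2) := by
      rw [h4, ← pow_mul, ← pow_add, ← pow_succ]
      congr 1; omega
    have h40 : (4:ℚ)^(2*m) ≠ 0 := by positivity
    field_simp
    linear_combination (cCoeff n m / 2) * e1 - (cCoeff n m / 2) * e2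
  rw [← hnum]
  ring

lemma altsum : ∀ (M : ℕ) (p : ℚ[X]), p.degree < (M : ℕ) →
    ∑ r ∈ range (M+1), (-1:ℚ)^r * (M.choose r) * p.eval (r:ℚ) = 0 := by
  intro M
  induction M with
  | zero =>
    intro p hp
    have hp0 : p = 0 := by
      by_contra h
      have := Polynomial.natDegree_lt_iff_degree_lt (n := 0) h |>.mpr (by simpa using hp)
      omega
    simp [hp0]
  | succ M ih =>
    intro p hp
    set q : ℚ[X] := p - p.comp (X + C 1) with hqdef
    have hq : ∀ r : ℕ, q.eval (r:ℚ) = p.eval (r:ℚ) - p.eval ((r:ℚ)+1) := by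
      intro r
      simp [hqdef, eval_comp]
    have hqdeg : q.degree < (M : ℕ) := by
      by_cases hp0 : p = 0
      · simp [hqdef, hp0]
      · have hcomp0 : p.comp (X + C 1) ≠ 0 := comp_X_add_C_ne_zero_iff.mpr hp0
        have hdeq : p.degree = (p.comp (X + C 1)).degree := by
          rw [degree_eq_natDegree hp0, degree_eq_natDegree hcomp0, natDegree_comp,
            natDegree_X_add_C, mul_one]
        have hlc : p.leadingCoeff = (p.comp (X + C 1)).leadingCoeff := by
          rw [leadingCoeff_comp (by rw [natDegree_X_add_C]; exact one_ne_zero),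
            leadingCoeff_X_add_C, one_pow, mul_one]
        have h1 : q.degree < p.degree := degree_sub_lt hdeq hp0 hlc
        have h2 : p.degree ≤ (M : ℕ) := by
          rw [degree_eq_natDegree hp0] at hp ⊢
          exact_mod_cast Nat.lt_succ_iff.mp (by exact_mod_cast hp)
        exact lt_of_lt_of_le h1 h2
    have key := ih q hqdeg
    -- expand the sum
    have expand : ∑ r ∈ range (M+2), (-1:ℚ)^r * ((M+1).choose r) * p.eval (r:ℚ)
        = ∑ r ∈ range (M+1), (-1:ℚ)^r * (M.choose r) * q.eval (r:ℚ) := by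
      have step1 : ∑ r ∈ range (M+2), (-1:ℚ)^r * ((M+1).choose r) * p.eval (r:ℚ)
          = (∑ r ∈ range (M+1), (-1:ℚ)^(r+1) * ((M.choose r : ℚ) + (M.choose (r+1) : ℚ)) * p.eval ((r:ℚ)+1))
            + p.eval 0 := by
        rw [Finset.sum_range_succ' (fun r => (-1:ℚ)^r * ((M+1).choose r) * p.eval (r:ℚ)) (M+1)]
        simp only [Nat.choose_succ_succ]
        push_cast
        norm_num
      rw [step1]
      have step2 : ∑ r ∈ range (M+1), (-1:ℚ)^(r+1) * ((M.choose r : ℚ) + (M.choose (r+1) : ℚ)) * p.eval ((r:ℚ)+1)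
          = (∑ r ∈ range (M+1), -((-1:ℚ)^r * (M.choose r) * p.eval ((r:ℚ)+1)))
            + ∑ r ∈ range (M+1), (-1:ℚ)^(r+1) * (M.choose (r+1)) * p.eval ((r:ℚ)+1) := by
        rw [← Finset.sum_add_distrib]
        apply Finset.sum_congr rfl
        intro r _
        ring
      rw [step2]
      have step3 : (∑ r ∈ range (M+1), (-1:ℚ)^(r+1) * (M.choose (r+1)) * p.eval ((r:ℚ)+1)) + p.eval 0
          = ∑ r ∈ range (M+2), (-1:ℚ)^r * (M.choose r) * p.eval (r:ℚ) := by
        rw [Finset.sum_range_succ' (fun r => (-1:ℚ)^r * (M.choose r) * p.eval (r:ℚ)) (M+1)]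
        norm_num
      have step4 : ∑ r ∈ range (M+2), (-1:ℚ)^r * (M.choose r) * p.eval (r:ℚ)
          = ∑ r ∈ range (M+1), (-1:ℚ)^r * (M.choose r) * p.eval (r:ℚ) := by
        rw [Finset.sum_range_succ]
        rw [Nat.choose_eq_zero_of_lt (by omega)]
        norm_num
      calc (∑ r ∈ range (M+1), -((-1:ℚ)^r * (M.choose r) * p.eval ((r:ℚ)+1)))
            + ∑ r ∈ range (M+1), (-1:ℚ)^(r+1) * (M.choose (r+1)) * p.eval ((r:ℚ)+1) + p.eval 0
          = (∑ r ∈ range (M+1), -((-1:ℚ)^r * (M.choose r) * p.eval ((r:ℚ)+1)))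
            + ((∑ r ∈ range (M+1), (-1:ℚ)^(r+1) * (M.choose (r+1)) * p.eval ((r:ℚ)+1)) + p.eval 0) := by ring
        _ = (∑ r ∈ range (M+1), -((-1:ℚ)^r * (M.choose r) * p.eval ((r:ℚ)+1)))
            + ∑ r ∈ range (M+1), (-1:ℚ)^r * (M.choose r) * p.eval (r:ℚ) := by rw [step3, step4]
        _ = ∑ r ∈ range (M+1), (-1:ℚ)^r * (M.choose r) * (p.eval (r:ℚ) - p.eval ((r:ℚ)+1)) := by
            rw [← Finset.sum_add_distrib]
            apply Finset.sum_congr rfl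
            intro r _
            ring
        _ = ∑ r ∈ range (M+1), (-1:ℚ)^r * (M.choose r) * q.eval (r:ℚ) := by
            apply Finset.sum_congr rfl
            intro r _
            rw [hq r]
    rw [expand, key]

lemma Tzero (n k : ℕ) (hn : 1 ≤ n) (hnk : n < k) :
    ∑ j ∈ Icc 1 k, (-1:ℚ)^(k-j) * (((2*k).choose (k-j)):ℚ) * (2*(j:ℚ))^(2*n) = 0 := by
  set p : ℚ[X] := (C (-2) * X + C (2*(k:ℚ)))^(2*n) with hpdef
  have hbase : (C (-2:ℚ) * X + C (2*(k:ℚ))).natDegree = 1 := natDegree_linear (by norm_num)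
  have hbase0 : (C (-2:ℚ) * X + C (2*(k:ℚ))) ≠ 0 := by
    intro h; rw [h] at hbase; simp at hbase
  have hp0 : p ≠ 0 := pow_ne_zero _ hbase0
  have hpnd : p.natDegree = 2*n := by
    rw [hpdef, natDegree_pow, hbase, mul_one]
  have hpdeg : p.degree < ((2*k : ℕ) : WithBot ℕ) := by
    rw [degree_eq_natDegree hp0, hpnd]
    exact_mod_cast (by omega : 2*n < 2*k)
  have h0 := altsum (2*k) p hpdeg
  have heval : ∀ r : ℕ, p.eval (r:ℚ) = ((-2)*(r:ℚ) + 2*(k:ℚ))^(2*n) := by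
    intro r; simp [hpdef]
  -- split the range
  have hsplit : ∑ r ∈ range (2*k+1), (-1:ℚ)^r * (((2*k).choose r):ℚ) * p.eval (r:ℚ)
      = (∑ r ∈ range k, (-1:ℚ)^r * (((2*k).choose r):ℚ) * p.eval (r:ℚ))
        + ∑ i ∈ range (k+1), (-1:ℚ)^(k+i) * (((2*k).choose (k+i)):ℚ) * p.eval ((k+i:ℕ):ℚ) := by
    rw [Finset.range_eq_Ico,
      ← Finset.sum_Ico_consecutive (fun r => (-1:ℚ)^r * (((2*k).choose r):ℚ) * p.eval (r:ℚ))
        (Nat.zero_le k) (by omega : k ≤ 2*k+1), ← Finset.range_eq_Ico]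
    congr 1
    rw [Finset.sum_Ico_eq_sum_range, show 2*k+1-k = k+1 from by omega]
  have hmid : ∑ i ∈ range (k+1), (-1:ℚ)^(k+i) * (((2*k).choose (k+i)):ℚ) * p.eval ((k+i:ℕ):ℚ)
      = ∑ i ∈ range k, (-1:ℚ)^(k+(i+1)) * (((2*k).choose (k+(i+1))):ℚ) * p.eval ((k+(i+1):ℕ):ℚ) := by
    rw [Finset.sum_range_succ'
      (fun i => (-1:ℚ)^(k+i) * (((2*k).choose (k+i)):ℚ) * p.eval ((k+i:ℕ):ℚ)) k]
    have hz : p.eval ((k:ℕ):ℚ) = 0 := by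
      rw [heval, show (-2:ℚ)*(k:ℚ) + 2*(k:ℚ) = 0 from by ring]
      exact zero_pow (by omega)
    simp [hz]
  -- identify both halves with the goal sum
  set S : ℚ := ∑ j ∈ Icc 1 k, (-1:ℚ)^(k-j) * (((2*k).choose (k-j)):ℚ) * (2*(j:ℚ))^(2*n) with hSdef
  have hSr : S = ∑ i ∈ range k, (-1:ℚ)^(k-(1+i)) * (((2*k).choose (k-(1+i))):ℚ) * (2*((1+i:ℕ):ℚ))^(2*n) := by
    rw [hSdef, show Icc 1 k = Ico 1 (k+1) by rfl, Finset.sum_Ico_eq_sum_range]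
    have : k+1-1 = k := by omega
    rw [this]
  have hfirst : ∑ r ∈ range k, (-1:ℚ)^r * (((2*k).choose r):ℚ) * p.eval (r:ℚ) = S := by
    rw [← Finset.sum_range_reflect (fun r => (-1:ℚ)^r * (((2*k).choose r):ℚ) * p.eval (r:ℚ)) k, hSr]
    apply Finset.sum_congr rfl
    intro i hi
    have hik : i < k := Finset.mem_range.mp hi
    have h1 : k - 1 - i = k - (1+i) := by omega
    have h2 : ((k - (1+i) : ℕ) : ℚ) = (k:ℚ) - (1+i:ℕ) := by
      rw [Nat.cast_sub (by omega)]
    rw [h1, heval, h2]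
    congr 1
    push_cast
    ring
  have hsecond : ∑ i ∈ range k, (-1:ℚ)^(k+(i+1)) * (((2*k).choose (k+(i+1))):ℚ) * p.eval ((k+(i+1):ℕ):ℚ) = S := by
    rw [hSr]
    apply Finset.sum_congr rfl
    intro i hi
    have hik : i < k := Finset.mem_range.mp hi
    have hsgn : (-1:ℚ)^(k+(i+1)) = (-1:ℚ)^(k-(1+i)) := by
      rw [show k+(i+1) = (k-(1+i)) + 2*(1+i) from by omega, pow_add, pow_mul]
      norm_num
    have hch : (2*k).choose (k+(i+1)) = (2*k).choose (k-(1+i)) := by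
      rw [show k-(1+i) = 2*k - (k+(i+1)) from by omega, Nat.choose_symm (by omega)]
    have hev : p.eval ((k+(i+1):ℕ):ℚ) = (2*((1+i:ℕ):ℚ))^(2*n) := by
      rw [heval]
      have : (-2)*(((k+(i+1):ℕ)):ℚ) + 2*(k:ℚ) = -(2*((1+i:ℕ):ℚ)) := by push_cast; ring
      rw [this, Even.neg_pow (even_two_mul n)]
    rw [hsgn, hch, hev]
  rw [hsplit, hmid, hfirst, hsecond] at h0
  linarith

lemma cCoeff_zero (n k : ℕ) (hn : 1 ≤ n) (h : n < k) : cCoeff n k = 0 := by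
  unfold cCoeff
  rw [Tzero n k hn h, mul_zero]

lemma final_sum (N nn mm : ℕ) (hn : nn < N) (hm : mm < N) :
    ∑ k ∈ range N, uEnt (nn+1) (k+1) *
      (if mm ≤ k ∧ k+1 ≤ 2*(mm+1) then (2:ℚ)^(2*(mm+1)+1) * (((mm+1).choose (k-mm)):ℚ) else 0)
    = 2^(2*(nn+1)+1) * uEnt (nn+1) (mm+1) := by
  set f : ℕ → ℚ := fun k => uEnt (nn+1) (k+1) *
      (if mm ≤ k ∧ k+1 ≤ 2*(mm+1) then (2:ℚ)^(2*(mm+1)+1) * (((mm+1).choose (k-mm)):ℚ) else 0)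
    with hf
  have hext : ∑ k ∈ range N, f k = ∑ k ∈ range (max N (2*mm+2)), f k := by
    apply Finset.sum_subset (Finset.range_subset_range.mpr (le_max_left _ _))
    intro k hk hk'
    have hkN : N ≤ k := by simpa using hk' 
    rw [hf]; dsimp only
    by_cases hc : mm ≤ k ∧ k+1 ≤ 2*(mm+1)
    · have hz : uEnt (nn+1) (k+1) = 0 := by
        unfold uEnt
        rw [cCoeff_zero (nn+1) (k+1) (by omega) (by omega), mul_zero]
      rw [hz, zero_mul]
    · rw [if_neg hc, mul_zero]
  have hext2 : ∑ k ∈ range (2*mm+2), f k = ∑ k ∈ range (max N (2*mm+2)), f k := by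
    apply Finset.sum_subset (Finset.range_subset_range.mpr (le_max_right _ _))
    intro k hk hk'
    have hk2 : 2*mm+2 ≤ k := by simpa using hk' 
    have hc : ¬(mm ≤ k ∧ k+1 ≤ 2*(mm+1)) := by omega
    rw [hf]; dsimp only; rw [if_neg hc, mul_zero]
  rw [hext, ← hext2]
  have hsplit : ∑ k ∈ range (2*mm+2), f k = ∑ i ∈ range (mm+1+1), f (mm+i) := by
    rw [Finset.range_eq_Ico, ← Finset.sum_Ico_consecutive f (Nat.zero_le mm) (by omega : mm ≤ 2*mm+2)]
    have h1 : ∑ k ∈ Ico 0 mm, f k = 0 := by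
      apply Finset.sum_eq_zero
      intro k hk
      have hkm : k < mm := (Finset.mem_Ico.mp hk).2
      have hc : ¬(mm ≤ k ∧ k+1 ≤ 2*(mm+1)) := by omega
      rw [hf]; dsimp only; rw [if_neg hc, mul_zero]
    rw [h1, zero_add, Finset.sum_Ico_eq_sum_range, show 2*mm+2-mm = mm+1+1 from by omega,
      Finset.range_eq_Ico]
  rw [hsplit]
  have hterm : ∀ i ∈ range (mm+1+1), f (mm+i)
      = ((-1:ℚ)^(nn+1) / ((2*(nn+1)).factorial : ℚ)) *
        ((((mm+1).choose i):ℚ) * cCoeff (nn+1) (mm+1+i) * (2:ℚ)^(2*(mm+1)+1)) := by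
    intro i hi
    have hi2 : i ≤ mm+1 := by have := Finset.mem_range.mp hi; omega
    rw [hf]; dsimp only
    rw [if_pos ⟨by omega, by omega⟩, show mm+i-mm = i from by omega]
    unfold uEnt
    rw [show mm+i+1 = mm+1+i from by omega]
    ring
  rw [Finset.sum_congr rfl hterm, ← Finset.mul_sum]
  have hmain := main_id (nn+1) (mm+1) (by omega)
  have hpull : ∑ i ∈ range (mm+1+1), ((((mm+1).choose i):ℚ) * cCoeff (nn+1) (mm+1+i) * (2:ℚ)^(2*(mm+1)+1))
      = (2:ℚ)^(2*(mm+1)+1) * ∑ i ∈ range (mm+1+1), (((mm+1).choose i):ℚ) * cCoeff (nn+1) (mm+1+i) := by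
    rw [Finset.mul_sum]
    apply Finset.sum_congr rfl
    intros; ring
  rw [hpull, hmain]
  unfold uEnt
  ring

theorem stmt_16 (N : ℕ) (hN : 1 ≤ N) :
    let U : Matrix (Fin N) (Fin N) ℚ :=
      fun n k => uEnt ((n : ℕ) + 1) ((k : ℕ) + 1)
    let L : Matrix (Fin N) (Fin N) ℚ :=
      fun n k =>
        if (k : ℕ) ≤ (n : ℕ) ∧ (n : ℕ) + 1 ≤ 2 * ((k : ℕ) + 1) then
          2 ^ (2 * ((k : ℕ) + 1) + 1) * (((k : ℕ) + 1).choose ((n : ℕ) - (k : ℕ)))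
        else 0
    let D : Matrix (Fin N) (Fin N) ℚ :=
      Matrix.diagonal fun i => 2 ^ (2 * ((i : ℕ) + 1) + 1)
    U * L = D * U := by
  intro U L D
  ext n m
  rw [Matrix.mul_apply, Matrix.mul_apply]
  have hR : ∑ k : Fin N, D n k * U k m
      = (2:ℚ) ^ (2 * ((n:ℕ) + 1) + 1) * uEnt ((n:ℕ)+1) ((m:ℕ)+1) := by
    rw [Finset.sum_eq_single n]
    · simp only [D, U]
      rw [Matrix.diagonal_apply_eq]
    · intro k _ hk
      simp only [D]
      rw [Matrix.diagonal_apply_ne _ (Ne.symm hk), zero_mul]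
    · intro h
      exact absurd (Finset.mem_univ n) h
  rw [hR]
  have hL : ∀ k : Fin N, U n k * L k m
      = uEnt ((n:ℕ)+1) ((k:ℕ)+1) *
        (if (m:ℕ) ≤ (k:ℕ) ∧ (k:ℕ)+1 ≤ 2*((m:ℕ)+1) then
          (2:ℚ)^(2*((m:ℕ)+1)+1) * ((((m:ℕ)+1).choose ((k:ℕ)-(m:ℕ))):ℚ) else 0) := by
    intro k
    simp [U, L]
  rw [Finset.sum_congr rfl (fun k _ => hL k)]
  rw [Fin.sum_univ_eq_sum_range (fun k => uEnt ((n:ℕ)+1) (k+1) *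
        (if (m:ℕ) ≤ k ∧ k+1 ≤ 2*((m:ℕ)+1) then
          (2:ℚ)^(2*((m:ℕ)+1)+1) * ((((m:ℕ)+1).choose (k-(m:ℕ))):ℚ) else 0)) N]
  exact final_sum N n m n.isLt m.isLt
end
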